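/- Let T : ℝ³ → ℝ³ have matrix rows (1,0,0), (1,1,1), (0,0,1). Then T is positive, its spectrum is {1}, its fixed space ker(I − T) is spanned by v₁ = (1,0,−1) and v₂ = (0,1,0), T is not power bounded, and ker(I − T) is not a lattice subspace of ℝ³ since its positive cone ℝ³₊ ∩ ker(I − T) does not span ker(I − T). -/

import Mathlib

private lemma myT_apply (x : Fin 3 → ℝ) :
    Matrix.toLin' !![(1:ℝ), 0, 0; 1, 1, 1; 0, 0, 1] x = ![x 0, x 0 + x 1 + x 2, x 2] := by
  ext i
  fin_cases i <;>
    simp [Matrix.toLin'_apply, Matrix.mulVec, dotProduct, Fin.sum_univ_three]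

private lemma myT_ker (x : Fin 3 → ℝ) :
    x ∈ LinearMap.ker (1 - Matrix.toLin' !![(1:ℝ), 0, 0; 1, 1, 1; 0, 0, 1]) ↔
      x 0 + x 2 = 0 := by
  rw [LinearMap.mem_ker, LinearMap.sub_apply, Module.End.one_apply, myT_apply, sub_eq_zero,
    funext_iff]
  constructor
  · intro h
    have := h 1
    simp at this
    linarith
  · intro h i
    fin_cases i <;> simp <;> linarith

/-- Example: the positive operator `T` on `ℝ³` with matrix rows
`(1,0,0)`, `(1,1,1)`, `(0,0,1)` has spectrum `{1}`, fixed space spanned by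
`v₁ = (1,0,-1)` and `v₂ = (0,1,0)`, is not power bounded, and its fixed space is
not a lattice subspace of `ℝ³` since the positive cone of the fixed space does
not span it. -/
theorem non_power_bounded_fixed_space_not_lattice_subspace :
    let T : (Fin 3 → ℝ) →ₗ[ℝ] (Fin 3 → ℝ) :=
      Matrix.toLin' !![1, 0, 0; 1, 1, 1; 0, 0, 1]
    -- `T` is positive:
    (∀ x : Fin 3 → ℝ, 0 ≤ x → 0 ≤ T x) ∧
    -- the spectrum of `T` is `{1}`:
    spectrum ℝ T = {1} ∧
    -- the fixed space of `T` is spanned by `(1,0,-1)` and `(0,1,0)`: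
    LinearMap.ker (1 - T) = Submodule.span ℝ {![1, 0, -1], ![0, 1, 0]} ∧
    -- `T` is not power bounded (w.r.t. the sup norm on `ℝ³`):
    ¬ (∃ C : ℝ, ∀ n : ℕ, ‖(LinearMap.toContinuousLinearMap T) ^ n‖ ≤ C) ∧
    -- the positive cone of the fixed space does not span the fixed space:
    Submodule.span ℝ {x : Fin 3 → ℝ | x ∈ LinearMap.ker (1 - T) ∧ 0 ≤ x} ≠
      LinearMap.ker (1 - T) ∧
    -- hence the fixed space is not a lattice subspace of `ℝ³`:
    ¬ (∀ f ∈ LinearMap.ker (1 - T), ∀ g ∈ LinearMap.ker (1 - T),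
      ∃ m : Fin 3 → ℝ, IsLeast
        {h : Fin 3 → ℝ | h ∈ LinearMap.ker (1 - T) ∧ f ≤ h ∧ g ≤ h} m) := by
  intro T
  refine ⟨?_, ?_, ?_, ?_, ?_, ?_⟩
  · -- positivity
    intro x hx
    rw [Pi.le_def] at hx ⊢
    intro i
    have h0 := hx 0; have h1 := hx 1; have h2 := hx 2
    simp only [Pi.zero_apply] at h0 h1 h2 ⊢
    rw [show T x = ![x 0, x 0 + x 1 + x 2, x 2] from myT_apply x]
    fin_cases i <;> simp <;> linarith
  · -- spectrum
    rw [show T = Matrix.toLinAlgEquiv' !![(1:ℝ), 0, 0; 1, 1, 1; 0, 0, 1] from rfl,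
      AlgEquiv.spectrum_eq]
    ext μ
    rw [spectrum.mem_iff, Set.mem_singleton_iff, Matrix.isUnit_iff_isUnit_det]
    have hdet : ((algebraMap ℝ (Matrix (Fin 3) (Fin 3) ℝ)) μ -
        !![(1:ℝ), 0, 0; 1, 1, 1; 0, 0, 1]).det = (μ - 1)^3 := by
      rw [Matrix.det_fin_three]
      simp [Matrix.sub_apply, Matrix.algebraMap_matrix_apply, Matrix.vecHead, Matrix.vecTail,
        Function.comp]
      ring
    rw [hdet]
    constructor
    · intro h
      by_contra hne
      exact h (IsUnit.pow 3 (isUnit_iff_ne_zero.mpr (sub_ne_zero.mpr hne)))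
    · intro h hu
      simp [h] at hu
  · -- fixed space
    apply le_antisymm
    · intro x hx
      rw [myT_ker] at hx
      rw [Submodule.mem_span_pair]
      refine ⟨x 0, x 1, ?_⟩
      ext i
      fin_cases i <;> simp <;> linarith
    · rw [Submodule.span_le]
      rintro x (rfl | rfl) <;> rw [SetLike.mem_coe, myT_ker] <;> norm_num [Matrix.cons_val_two]
  · -- not power bounded
    rintro ⟨C, hC⟩
    have key : ∀ n : ℕ, (T ^ n) ![1, 0, 0] = ![1, (n : ℝ), 0] := by
      intro n
      induction n with
      | zero => simp
      | succ n ih =>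
        rw [pow_succ', Module.End.mul_apply, ih,
          show T ![1, (n:ℝ), 0] = _ from myT_apply _]
        ext i
        fin_cases i <;> simp <;> push_cast <;> ring
    have key2 : ∀ n : ℕ, ((LinearMap.toContinuousLinearMap T) ^ n) ![1, 0, 0]
        = (T ^ n) ![1, 0, 0] := by
      intro n
      induction n with
      | zero => simp
      | succ n ih =>
        rw [pow_succ', pow_succ', ContinuousLinearMap.mul_apply, ih, Module.End.mul_apply]
        rfl
    obtain ⟨n, hn⟩ := exists_nat_gt C
    have h1 : ‖(![1, 0, 0] : Fin 3 → ℝ)‖ ≤ 1 := by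
      rw [pi_norm_le_iff_of_nonneg zero_le_one]
      intro i; fin_cases i <;> simp
    have h2 : (n : ℝ) ≤ ‖((LinearMap.toContinuousLinearMap T) ^ n) ![1, 0, 0]‖ := by
      rw [key2, key n]
      calc (n : ℝ) = ‖(![1, (n:ℝ), 0] : Fin 3 → ℝ) 1‖ := by simp
        _ ≤ ‖(![1, (n:ℝ), 0] : Fin 3 → ℝ)‖ := norm_le_pi_norm _ 1
    have h3 := ((LinearMap.toContinuousLinearMap T) ^ n).le_opNorm ![1, 0, 0]
    have h4 : (0:ℝ) ≤ ‖(LinearMap.toContinuousLinearMap T) ^ n‖ := norm_nonneg _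
    nlinarith [hC n]
  · -- cone does not span
    intro heq
    have hv : ![1, 0, -1] ∈ LinearMap.ker (1 - T) := by rw [myT_ker]; norm_num [Matrix.cons_val_two]
    rw [← heq] at hv
    have hsub : Submodule.span ℝ {x : Fin 3 → ℝ | x ∈ LinearMap.ker (1 - T) ∧ 0 ≤ x} ≤
        LinearMap.ker (LinearMap.proj 0 : (Fin 3 → ℝ) →ₗ[ℝ] ℝ) := by
      rw [Submodule.span_le]
      rintro x ⟨hk, hpos⟩
      rw [myT_ker] at hk
      have h0 := hpos 0; have h2 := hpos 2
      simp only [Pi.zero_apply] at h0 h2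
      rw [SetLike.mem_coe, LinearMap.mem_ker, LinearMap.proj_apply]
      linarith
    have := hsub hv
    rw [LinearMap.mem_ker, LinearMap.proj_apply] at this
    norm_num at this
  · -- not a lattice subspace
    intro h
    have hf : ![1, 0, -1] ∈ LinearMap.ker (1 - T) := by rw [myT_ker]; norm_num [Matrix.cons_val_two]
    have hg : ![(-1:ℝ), 0, 1] ∈ LinearMap.ker (1 - T) := by rw [myT_ker]; norm_num [Matrix.cons_val_two]
    obtain ⟨m, ⟨hmk, hfm, hgm⟩, -⟩ := h _ hf _ hg
    rw [myT_ker] at hmk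
    have h1 := hfm 0
    have h2 := hgm 2
    simp at h1 h2
    linarith
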